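/- arXiv:1502.07899 — 2 statements merged into one kernel-verified Lean document; each statement's English description precedes it below -/
import Mathlib

section
/- Let $x_1, x_2 : [0,T] \to \mathbb{R}$ be differentiable functions satisfying $\dot{x}_1(t) \le a_{11} x_1(t) + a_{12} x_2(t)$ and $\dot{x}_2(t) \le \frac{a_{21}}{\epsilon} x_1(t) - \frac{a_{22}}{\epsilon} x_2(t)$ with $x_1(0) = 0$, $x_2(0) = 1$, where $a_{ij} > 0$ and $0 < \epsilon$, and assume $x_1(t) \ge 0$ for all $t \in [0,T]$. Then there exists a constant $C > 0$ depending only on the $a_{ij}$ and $T$ (not on $\epsilon$) such that $\max_{0 \le s \le T} x_1(s) \le C\epsilon$ and $x_2(t) \le e^{-a_{22} t/\epsilon} + C\epsilon$ for all $t \in [0,T]$. -/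
open Set Filter Topology

private lemma exp_deriv' (c t : ℝ) :
    HasDerivAt (fun s : ℝ => Real.exp (c * s)) (c * Real.exp (c * t)) t := by
  simpa [mul_comm] using ((hasDerivAt_id t).const_mul c).exp

private lemma right_pos {g : ℝ → ℝ} {t d : ℝ} (hg : HasDerivAt g d t) (hd : 0 < d)
    (h0 : g t = 0) : ∀ᶠ s in 𝓝[>] t, 0 < g s := by
  have hs : Filter.Tendsto (slope g t) (𝓝[≠] t) (𝓝 d) :=
    hasDerivAt_iff_tendsto_slope.mp hg
  have h1 : ∀ᶠ s in 𝓝[≠] t, 0 < slope g t s := hs.eventually (eventually_gt_nhds hd)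
  have h2 : ∀ᶠ s in 𝓝[>] t, 0 < slope g t s :=
    h1.filter_mono (nhdsWithin_mono t fun x hx => ne_of_gt hx)
  filter_upwards [h2, self_mem_nhdsWithin] with s hslope hs'
  have hst : 0 < s - t := sub_pos.2 hs'
  rw [slope_def_field, h0, sub_zero] at hslope
  have := mul_pos hslope hst
  rwa [div_mul_cancel₀ _ (ne_of_gt hst)] at this

/-- Quasimonotone comparison: if g1, g2 start nonnegative and have strictly positive
derivative whenever they touch zero (with the other one nonnegative), they stay nonnegative. -/
private lemma comparison {T : ℝ} {g1 g2 d1 d2 : ℝ → ℝ}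
    (h1 : ∀ t ∈ Set.Icc (0:ℝ) T, HasDerivAt g1 (d1 t) t)
    (h2 : ∀ t ∈ Set.Icc (0:ℝ) T, HasDerivAt g2 (d2 t) t)
    (k1 : ∀ t ∈ Set.Icc (0:ℝ) T, 0 ≤ g2 t → g1 t = 0 → 0 < d1 t)
    (k2 : ∀ t ∈ Set.Icc (0:ℝ) T, 0 ≤ g1 t → g2 t = 0 → 0 < d2 t)
    (i1 : 0 ≤ g1 0) (i2 : 0 ≤ g2 0) :
    ∀ t ∈ Set.Icc (0:ℝ) T, 0 ≤ g1 t ∧ 0 ≤ g2 t := by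
  by_contra hcon
  push_neg at hcon
  obtain ⟨t₀, ht₀, ht₀'⟩ := hcon
  have hSmem : t₀ ∈ {t | t ∈ Set.Icc (0:ℝ) T ∧ (g1 t < 0 ∨ g2 t < 0)} := by
    refine ⟨ht₀, ?_⟩
    rcases le_or_gt 0 (g1 t₀) with h | h
    · exact Or.inr (ht₀' h)
    · exact Or.inl h
  set S : Set ℝ := {t | t ∈ Set.Icc (0:ℝ) T ∧ (g1 t < 0 ∨ g2 t < 0)} with hSdef
  have hSne : S.Nonempty := ⟨t₀, hSmem⟩
  have hSbdd : BddBelow S := ⟨0, fun s hs => hs.1.1⟩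
  set c := sInf S with hcdef
  have hc0 : 0 ≤ c := le_csInf hSne (fun s hs => hs.1.1)
  have hcT : c ≤ T := le_trans (csInf_le hSbdd hSmem) ht₀.2
  have hcIcc : c ∈ Set.Icc (0:ℝ) T := ⟨hc0, hcT⟩
  have hlb : ∀ s ∈ S, c ≤ s := fun s hs => csInf_le hSbdd hs
  -- c is not in S
  have key : ∀ g : ℝ → ℝ, ContinuousAt g c → 0 ≤ g 0 →
      (∀ s, s ∈ Set.Icc (0:ℝ) T → g s < 0 → s ∈ S) → g c < 0 → False := by
    intro g hgc hg0 hmem hneg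
    rcases eq_or_lt_of_le hc0 with h | hcpos
    · have h2 : 0 ≤ g c := by rw [← h]; exact hg0
      linarith
    · have ev1 : ∀ᶠ s in 𝓝 c, g s < 0 := hgc.eventually (eventually_lt_nhds hneg)
      have ev2 : ∀ᶠ s in 𝓝 c, 0 < s := eventually_gt_nhds hcpos
      have ev : ∀ᶠ s in 𝓝[<] c, g s < 0 ∧ 0 < s :=
        ((ev1.and ev2).filter_mono nhdsWithin_le_nhds)
      obtain ⟨s, hs1, hs2⟩ := (ev.and self_mem_nhdsWithin).exists
      have hsS : s ∈ S := hmem s ⟨hs1.2.le, le_of_lt (lt_of_lt_of_le hs2 hcT)⟩ hs1.1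
      exact absurd (hlb s hsS) (not_le.2 hs2)
  have hcont1 : ContinuousAt g1 c := (h1 c hcIcc).continuousAt
  have hcont2 : ContinuousAt g2 c := (h2 c hcIcc).continuousAt
  have hg1c : 0 ≤ g1 c := by
    by_contra h
    exact key g1 hcont1 i1 (fun s hs hneg => ⟨hs, Or.inl hneg⟩) (lt_of_not_ge h)
  have hg2c : 0 ≤ g2 c := by
    by_contra h
    exact key g2 hcont2 i2 (fun s hs hneg => ⟨hs, Or.inr hneg⟩) (lt_of_not_ge h)
  have hcS : c ∉ S := by
    intro h
    rcases h.2 with h' | h' <;> linarith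
  -- right positivity
  have E1 : ∀ᶠ s in 𝓝[>] c, 0 < g1 s := by
    rcases eq_or_lt_of_le hg1c with h | h
    · exact right_pos (h1 c hcIcc) (k1 c hcIcc hg2c h.symm) h.symm
    · exact (hcont1.eventually (eventually_gt_nhds h)).filter_mono nhdsWithin_le_nhds
  have E2 : ∀ᶠ s in 𝓝[>] c, 0 < g2 s := by
    rcases eq_or_lt_of_le hg2c with h | h
    · exact right_pos (h2 c hcIcc) (k2 c hcIcc hg1c h.symm) h.symm
    · exact (hcont2.eventually (eventually_gt_nhds h)).filter_mono nhdsWithin_le_nhds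
  obtain ⟨u, hu, hsub⟩ := mem_nhdsGT_iff_exists_Ioc_subset.mp (E1.and E2)
  have hcu : c < u := hu
  obtain ⟨s, hsS, hsu⟩ := (csInf_lt_iff hSbdd hSne).mp (lt_of_eq_of_lt hcdef.symm hcu)
  have hscs : c < s := lt_of_le_of_ne (hlb s hsS) (fun h => hcS (h ▸ hsS))
  have hmem : s ∈ Set.Ioc c u := ⟨hscs, hsu.le⟩
  have := hsub hmem
  rcases hsS.2 with h | h <;> linarith [this.1, this.2]

theorem stmt_1 (T a11 a12 a21 a22 : ℝ) (hT : 0 < T)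
    (h11 : 0 < a11) (h12 : 0 < a12) (h21 : 0 < a21) (h22 : 0 < a22) :
    ∃ C : ℝ, 0 < C ∧
      ∀ ε : ℝ, 0 < ε →
        ∀ x1 x2 : ℝ → ℝ,
          (∀ t ∈ Set.Icc (0:ℝ) T, DifferentiableAt ℝ x1 t) →
          (∀ t ∈ Set.Icc (0:ℝ) T, DifferentiableAt ℝ x2 t) →
          (∀ t ∈ Set.Icc (0:ℝ) T, deriv x1 t ≤ a11 * x1 t + a12 * x2 t) →
          (∀ t ∈ Set.Icc (0:ℝ) T, deriv x2 t ≤ (a21 / ε) * x1 t - (a22 / ε) * x2 t) →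
          x1 0 = 0 → x2 0 = 1 →
          (∀ t ∈ Set.Icc (0:ℝ) T, 0 ≤ x1 t) →
          (∀ s ∈ Set.Icc (0:ℝ) T, x1 s ≤ C * ε) ∧
          (∀ t ∈ Set.Icc (0:ℝ) T, x2 t ≤ Real.exp (-(a22 * t) / ε) + C * ε) := by
  set A : ℝ := a12 / a22 with hA
  set B : ℝ := a21 * a12 / a22 ^ 2 with hB
  set lam : ℝ := a11 + a12 * a21 / a22 with hlam
  have hApos : 0 < A := div_pos h12 h22
  have hBpos : 0 < B := div_pos (mul_pos h21 h12) (by positivity)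
  have hlampos : 0 < lam := by
    rw [hlam]; positivity
  refine ⟨(A + B) * Real.exp (lam * T), by positivity, ?_⟩
  intro ε hε x1 x2 hdx1 hdx2 hineq1 hineq2 hx10 hx20 hx1nn
  have hεne : ε ≠ 0 := ne_of_gt hε
  have ha22ne : a22 ≠ 0 := ne_of_gt h22
  set κ : ℝ := -(a22 / ε) with hκ
  set F : ℝ → ℝ := fun t => Real.exp (lam * t) with hF
  set E : ℝ → ℝ := fun t => Real.exp (κ * t) with hE
  set g1 : ℝ → ℝ := fun t => A * ε * (F t - E t) - x1 t with hg1
  set g2 : ℝ → ℝ := fun t => E t + B * ε * F t - x2 t with hg2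
  set d1 : ℝ → ℝ := fun t => A * ε * (lam * F t - κ * E t) - deriv x1 t with hd1
  set d2 : ℝ → ℝ := fun t => κ * E t + B * ε * (lam * F t) - deriv x2 t with hd2
  have hDg1 : ∀ t ∈ Set.Icc (0:ℝ) T, HasDerivAt g1 (d1 t) t := by
    intro t ht
    exact (((exp_deriv' lam t).sub (exp_deriv' κ t)).const_mul (A * ε)).sub
      (hdx1 t ht).hasDerivAt
  have hDg2 : ∀ t ∈ Set.Icc (0:ℝ) T, HasDerivAt g2 (d2 t) t := by
    intro t ht
    exact ((exp_deriv' κ t).add ((exp_deriv' lam t).const_mul (B * ε))).sub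
      (hdx2 t ht).hasDerivAt
  have hEpos : ∀ t, 0 < E t := fun t => Real.exp_pos _
  have hFpos : ∀ t, 0 < F t := fun t => Real.exp_pos _
  -- strict supersolution identities
  have hid1 : ∀ t : ℝ, A * ε * (lam * F t - κ * E t) =
      a11 * (A * ε * (F t - E t)) + a12 * (E t + B * ε * F t) + a11 * A * ε * E t := by
    intro t
    rw [hA, hB, hlam, hκ]
    field_simp
    ring
  have hid2 : ∀ t : ℝ, κ * E t + B * ε * (lam * F t) =
      (a21 / ε) * (A * ε * (F t - E t)) - (a22 / ε) * (E t + B * ε * F t)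
        + (B * ε * lam * F t + a21 * A * E t) := by
    intro t
    rw [hA, hB, hlam, hκ]
    field_simp
    ring
  have hk1 : ∀ t ∈ Set.Icc (0:ℝ) T, 0 ≤ g2 t → g1 t = 0 → 0 < d1 t := by
    intro t ht hg2t hg1t
    have hx1t : x1 t = A * ε * (F t - E t) := by
      have := hg1t; simp only [hg1] at this; linarith
    have hx2t : x2 t ≤ E t + B * ε * F t := by
      have := hg2t; simp only [hg2] at this; linarith
    have hdx : deriv x1 t ≤ a11 * x1 t + a12 * x2 t := hineq1 t ht
    have hmul : a12 * x2 t ≤ a12 * (E t + B * ε * F t) :=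
      mul_le_mul_of_nonneg_left hx2t h12.le
    have hmargin : 0 < a11 * A * ε * E t := by positivity
    have := hid1 t
    simp only [hd1]
    rw [hx1t] at hdx
    linarith
  have hk2 : ∀ t ∈ Set.Icc (0:ℝ) T, 0 ≤ g1 t → g2 t = 0 → 0 < d2 t := by
    intro t ht hg1t hg2t
    have hx2t : x2 t = E t + B * ε * F t := by
      have := hg2t; simp only [hg2] at this; linarith
    have hx1t : x1 t ≤ A * ε * (F t - E t) := by
      have := hg1t; simp only [hg1] at this; linarith
    have hdx' : ε * deriv x2 t ≤ a21 * x1 t - a22 * x2 t := by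
      calc ε * deriv x2 t ≤ ε * ((a21 / ε) * x1 t - (a22 / ε) * x2 t) :=
            mul_le_mul_of_nonneg_left (hineq2 t ht) hε.le
        _ = a21 * x1 t - a22 * x2 t := by field_simp
    have hid2' : ε * (κ * E t + B * ε * (lam * F t)) =
        a21 * (A * ε * (F t - E t)) - a22 * (E t + B * ε * F t)
          + ε * (B * ε * lam * F t) + a21 * A * ε * E t := by
      rw [hA, hB, hlam, hκ]
      field_simp
      ring
    have hmul : a21 * x1 t ≤ a21 * (A * ε * (F t - E t)) :=
      mul_le_mul_of_nonneg_left hx1t h21.le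
    have hmargin1 : 0 < ε * (B * ε * lam * F t) := by positivity
    have hmargin2 : 0 < a21 * A * ε * E t := by positivity
    have hfin : ε * deriv x2 t < ε * (κ * E t + B * ε * (lam * F t)) := by
      rw [hx2t] at hdx'
      linarith
    have hlt : deriv x2 t < κ * E t + B * ε * (lam * F t) :=
      (mul_lt_mul_iff_right₀ hε).mp hfin
    simp only [hd2]
    linarith
  have hi1 : 0 ≤ g1 0 := by
    simp only [hg1, hF, hE]
    simp [hx10]
  have hi2 : 0 ≤ g2 0 := by
    simp only [hg2, hF, hE]
    simp [hx20]
    positivity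
  have hcomp := comparison hDg1 hDg2 hk1 hk2 hi1 hi2
  constructor
  · intro s hs
    have h1 := (hcomp s hs).1
    simp only [hg1] at h1
    have hFle : F s ≤ Real.exp (lam * T) := by
      simp only [hF]
      exact Real.exp_le_exp.2 (mul_le_mul_of_nonneg_left hs.2 hlampos.le)
    have h2 : A * ε * F s ≤ A * ε * Real.exp (lam * T) :=
      mul_le_mul_of_nonneg_left hFle (by positivity)
    have h3 : 0 < A * ε * E s := by positivity
    have h4 : 0 < B * Real.exp (lam * T) * ε := by positivity
    linarith
  · intro t ht
    have h1 := (hcomp t ht).2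
    simp only [hg2] at h1
    have hEval : E t = Real.exp (-(a22 * t) / ε) := by
      simp only [hE]
      congr 1
      rw [hκ]; ring
    have hFle : F t ≤ Real.exp (lam * T) := by
      simp only [hF]
      exact Real.exp_le_exp.2 (mul_le_mul_of_nonneg_left ht.2 hlampos.le)
    have h2 : B * ε * F t ≤ B * ε * Real.exp (lam * T) :=
      mul_le_mul_of_nonneg_left hFle (by positivity)
    have h4 : 0 < A * Real.exp (lam * T) * ε := by positivity
    rw [← hEval]
    linarith [h1, h2, h4]
end

section
/- Let $x_1, x_2 : [0,T] \to \mathbb{R}$ satisfy $\dot{x}_1(t) \le a_1(1 + \epsilon^{-\gamma(t)}) x_1(t) + a_2 \epsilon^{\gamma(t)} x_2(t)$ and $\dot{x}_2(t) \le \frac{a_3}{\epsilon} x_1(t) - \frac{\lambda}{\epsilon} x_2(t)$, with $x_1(0) = 0$, $x_2(0) = 1$, $x_1(t) \ge 0$, where $0 < \epsilon < 1$, $a_1, a_2, a_3 \ge 0$, $\lambda > 0$, $t_1 = -\frac{2\epsilon \ln \epsilon}{\lambda}$, and $\gamma(t) = 1 - t/t_1$ for $0 \le t \le t_1$, $\gamma(t)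 = 0$ for $t_1 < t \le T$. Then there exists a constant $C > 0$ independent of $\epsilon$ such that $\max_{0 \le s \le T} x_1(s) \le C\epsilon^2$ and $x_2(t) \le e^{-\lambda t/\epsilon} + C\epsilon^2$ for all $t \in [0,T]$. -/
set_option maxHeartbeats 2000000

open Set Real

/-- If `f` is continuous on `[0,T]`, differentiable with nonpositive derivative on the
interior, then `f t ≤ f 0` on `[0,T]`. -/
lemma mono_aux {T : ℝ} (hT : 0 ≤ T) {f : ℝ → ℝ}
    (hc : ContinuousOn f (Set.Icc 0 T))
    (hd : ∀ t ∈ Set.Ioo (0:ℝ) T, ∃ f', HasDerivAt f f' t ∧ f' ≤ 0) :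
    ∀ t ∈ Set.Icc (0:ℝ) T, f t ≤ f 0 := by
  have ha : AntitoneOn f (Set.Icc 0 T) := by
    apply antitoneOn_of_deriv_nonpos (convex_Icc 0 T) hc
    · intro x hx
      rw [interior_Icc] at hx
      obtain ⟨f', hf', _⟩ := hd x hx
      exact hf'.differentiableAt.differentiableWithinAt
    · intro x hx
      rw [interior_Icc] at hx
      obtain ⟨f', hf', h0⟩ := hd x hx
      rw [hf'.deriv]; exact h0
  exact fun t ht => ha (Set.left_mem_Icc.2 hT) ht ht.1

theorem stmt_6 (T a1 a2 a3 lam : ℝ) (hT : 0 < T)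
    (h1 : 0 ≤ a1) (h2 : 0 ≤ a2) (h3 : 0 ≤ a3) (hlam : 0 < lam) :
    ∃ C : ℝ, 0 < C ∧
      ∀ ε : ℝ, 0 < ε → ε < 1 →
        ∀ γ : ℝ → ℝ,
          (∀ t, 0 ≤ t → t ≤ -(2 * ε * Real.log ε) / lam →
            γ t = 1 - t / (-(2 * ε * Real.log ε) / lam)) →
          (∀ t, -(2 * ε * Real.log ε) / lam < t → t ≤ T → γ t = 0) →
          ∀ x1 x2 : ℝ → ℝ,
            (∀ t ∈ Set.Icc (0:ℝ) T, DifferentiableAt ℝ x1 t) →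
            (∀ t ∈ Set.Icc (0:ℝ) T, DifferentiableAt ℝ x2 t) →
            (∀ t ∈ Set.Icc (0:ℝ) T,
              deriv x1 t ≤ a1 * (1 + ε ^ (-(γ t))) * x1 t + a2 * ε ^ (γ t) * x2 t) →
            (∀ t ∈ Set.Icc (0:ℝ) T,
              deriv x2 t ≤ (a3 / ε) * x1 t - (lam / ε) * x2 t) →
            x1 0 = 0 → x2 0 = 1 →
            (∀ t ∈ Set.Icc (0:ℝ) T, 0 ≤ x1 t) →
            (∀ s ∈ Set.Icc (0:ℝ) T, x1 s ≤ C * ε ^ 2) ∧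
            (∀ t ∈ Set.Icc (0:ℝ) T, x2 t ≤ Real.exp (-(lam * t) / ε) + C * ε ^ 2) := by
  have hT0 : (0:ℝ) ≤ T := hT.le
  set A0 : ℝ := (2*a1 + 4*a2*a3/lam)*T + 2*a1/lam with hA0def
  set C1 : ℝ := (2*a2/lam) * Real.exp A0 with hC1def
  have hC1nn : 0 ≤ C1 := by positivity
  refine ⟨C1 * (1 + a3/lam) + 1, by positivity, ?_⟩
  intro ε hε hε1 γ hγ1 hγ2 x1 x2 hd1 hd2 hode1 hode2 hx10 hx20 hx1nn
  set C : ℝ := C1 * (1 + a3/lam) + 1 with hCdef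
  have hεne : ε ≠ 0 := ne_of_gt hε
  have hlog : Real.log ε < 0 := Real.log_neg hε hε1
  have hlogne : Real.log ε ≠ 0 := ne_of_lt hlog
  set t1 : ℝ := -(2 * ε * Real.log ε) / lam with ht1def
  have ht1pos : 0 < t1 := by
    rw [ht1def]
    apply div_pos _ hlam
    nlinarith
  set b : ℝ := lam/(2*ε) with hbdef
  have hbpos : 0 < b := by positivity
  have h2b : lam/ε = 2*b := by rw [hbdef]; field_simp
  have hbt1 : b * t1 = -Real.log ε := by
    rw [hbdef, ht1def]; field_simp
  -- rpow identities
  have hm : ∀ t ∈ Set.Icc (0:ℝ) T,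
      ε ^ (γ t) = min (ε * Real.exp (b*t)) 1 ∧
      ε ^ (-(γ t)) = (min (ε * Real.exp (b*t)) 1)⁻¹ := by
    intro t ht
    by_cases hc : t ≤ t1
    · have hγt : γ t = 1 - t / t1 := hγ1 t ht.1 hc
      have hexp : Real.log ε * (1 - t/t1) = Real.log ε + b*t := by
        rw [hbdef, ht1def]; field_simp; ring
      have hP : ε * Real.exp (b*t) = Real.exp (Real.log ε + b*t) := by
        rw [Real.exp_add, Real.exp_log hε]
      have hPle : ε * Real.exp (b*t) ≤ 1 := by
        rw [hP, ← Real.exp_zero]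
        apply Real.exp_le_exp.2
        have : b * t ≤ b * t1 := by nlinarith
        rw [hbt1] at this; linarith
      have hmin : min (ε * Real.exp (b*t)) 1 = ε * Real.exp (b*t) := min_eq_left hPle
      constructor
      · rw [hγt, Real.rpow_def_of_pos hε, hexp, hmin, hP]
      · rw [hγt, Real.rpow_def_of_pos hε, hmin, hP, ← Real.exp_neg]
        congr 1
        rw [mul_neg, hexp]
    · push_neg at hc
      have hγt : γ t = 0 := hγ2 t hc ht.2
      have hPge : 1 ≤ ε * Real.exp (b*t) := by
        have hP : ε * Real.exp (b*t) = Real.exp (Real.log ε + b*t) := by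
          rw [Real.exp_add, Real.exp_log hε]
        rw [hP, ← Real.exp_zero]
        apply Real.exp_le_exp.2
        have : b * t1 ≤ b * t := by nlinarith
        rw [hbt1] at this; linarith
      have hmin : min (ε * Real.exp (b*t)) 1 = 1 := min_eq_right hPge
      rw [hγt, hmin, neg_zero, Real.rpow_zero]
      simp
  -- continuity of x1, x2 on [0,T]
  have hx1c : ContinuousOn x1 (Set.Icc 0 T) :=
    fun t ht => (hd1 t ht).continuousAt.continuousWithinAt
  have hx2c : ContinuousOn x2 (Set.Icc 0 T) :=
    fun t ht => (hd2 t ht).continuousAt.continuousWithinAt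
  have hexpc : ∀ c : ℝ, Continuous fun s : ℝ => Real.exp (c*s) :=
    fun c => (continuous_const.mul continuous_id).rexp
  have hexpnc : ∀ c : ℝ, Continuous fun s : ℝ => Real.exp (-(c*s)) :=
    fun c => (continuous_const.mul continuous_id).neg.rexp
  -- the primitive I
  set I : ℝ → ℝ := fun t => ∫ s in (0:ℝ)..t, x1 s * Real.exp (2*b*s) with hIdef
  have hintc : ContinuousOn (fun s => x1 s * Real.exp (2*b*s)) (Set.Icc 0 T) :=
    hx1c.mul ((hexpc (2*b)).continuousOn)
  have hIcont : ContinuousOn I (Set.Icc 0 T) := by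
    have := intervalIntegral.continuousOn_primitive_interval
      (f := fun s => x1 s * Real.exp (2*b*s)) (μ := MeasureTheory.volume) (a := (0:ℝ)) (b := T)
      (by
        rw [Set.uIcc_of_le hT0]
        exact hintc.integrableOn_Icc)
    rwa [Set.uIcc_of_le hT0] at this
  have hIderiv : ∀ t ∈ Set.Ioo (0:ℝ) T, HasDerivAt I (x1 t * Real.exp (2*b*t)) t := by
    intro t ht
    have hts : Set.uIcc (0:ℝ) t ⊆ Set.Icc 0 T := by
      rw [Set.uIcc_of_le ht.1.le]
      exact Set.Icc_subset_Icc le_rfl ht.2.le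
    apply intervalIntegral.integral_hasDerivAt_right
    · exact (hintc.mono hts).intervalIntegrable
    · exact ⟨Set.Ioo 0 T, Ioo_mem_nhds ht.1 ht.2,
        ((hintc.mono Set.Ioo_subset_Icc_self).aestronglyMeasurable measurableSet_Ioo)⟩
    · exact ((hd1 t (Set.mem_Icc_of_Ioo ht)).continuousAt.mul ((hexpc (2*b)).continuousAt))
  have hI0 : I 0 = 0 := intervalIntegral.integral_same
  have hInn : ∀ t ∈ Set.Icc (0:ℝ) T, 0 ≤ I t := by
    intro t ht
    apply intervalIntegral.integral_nonneg ht.1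
    intro s hs
    have hsT : s ∈ Set.Icc (0:ℝ) T := ⟨hs.1, le_trans hs.2 ht.2⟩
    exact mul_nonneg (hx1nn s hsT) (Real.exp_pos _).le
  -- y
  set y : ℝ → ℝ := fun t => (a3/ε) * Real.exp (-(2*b*t)) * I t with hydef
  have hy0 : y 0 = 0 := by simp [hydef, hI0]
  have hynn : ∀ t ∈ Set.Icc (0:ℝ) T, 0 ≤ y t := by
    intro t ht
    have hIt := hInn t ht
    simp only [hydef]
    have h0' : (0:ℝ) ≤ a3/ε := by positivity
    positivity
  have hycont : ContinuousOn y (Set.Icc 0 T) :=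
    (continuousOn_const.mul ((hexpnc (2*b)).continuousOn)).mul hIcont
  have hmulexp : ∀ t : ℝ, Real.exp (-(2*b*t)) * Real.exp (2*b*t) = 1 := by
    intro t; rw [← Real.exp_add]; simp
  have hyderiv : ∀ t ∈ Set.Ioo (0:ℝ) T,
      HasDerivAt y (a3/ε * x1 t - 2*b*y t) t := by
    intro t ht
    have h := ((((hasDerivAt_id t).const_mul (2*b)).neg.exp.const_mul (a3/ε)).mul
      (hIderiv t ht))
    refine h.congr_deriv ?_
    simp only [hydef, mul_one, id_eq, Pi.neg_apply]
    linear_combination (a3/ε * x1 t) * hmulexp t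
  -- Step A : x2 ≤ exp(-2bt) + y
  have hx2y : ∀ t ∈ Set.Icc (0:ℝ) T, x2 t ≤ Real.exp (-(2*b*t)) + y t := by
    have hfc : ContinuousOn (fun t => x2 t * Real.exp (2*b*t) - 1 - (a3/ε) * I t)
        (Set.Icc 0 T) := by
      refine ContinuousOn.sub (ContinuousOn.sub ?_ continuousOn_const)
        (continuousOn_const.mul hIcont)
      exact hx2c.mul ((hexpc (2*b)).continuousOn)
    have hfd : ∀ t ∈ Set.Ioo (0:ℝ) T, ∃ f',
        HasDerivAt (fun t => x2 t * Real.exp (2*b*t) - 1 - (a3/ε) * I t) f' t ∧ f' ≤ 0 := by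
      intro t ht
      have htT : t ∈ Set.Icc (0:ℝ) T := Set.mem_Icc_of_Ioo ht
      refine ⟨deriv x2 t * Real.exp (2*b*t) + x2 t * (Real.exp (2*b*t) * (2*b*1))
        - 0 - (a3/ε) * (x1 t * Real.exp (2*b*t)), ?_, ?_⟩
      · exact (((hd2 t htT).hasDerivAt.mul
          (((hasDerivAt_id t).const_mul (2*b)).exp)).sub
          (hasDerivAt_const t 1)).sub ((hIderiv t ht).const_mul (a3/ε))
      · have hde := hode2 t htT
        rw [h2b] at hde
        have hexp : (0:ℝ) < Real.exp (2*b*t) := Real.exp_pos _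
        nlinarith [mul_le_mul_of_nonneg_right hde hexp.le]
    have key := mono_aux hT0 hfc hfd
    intro t ht
    have h := key t ht
    simp only [hx20, hI0, mul_zero, Real.exp_zero, mul_one, sub_zero, one_mul] at h
    have hexp : (0:ℝ) < Real.exp (2*b*t) := Real.exp_pos _
    have hx2le : x2 t * Real.exp (2*b*t) ≤ 1 + (a3/ε) * I t := by linarith
    have h5 : x2 t ≤ (1 + (a3/ε) * I t) / Real.exp (2*b*t) :=
      (le_div_iff₀ hexp).2 hx2le
    have heq : (1 + (a3/ε) * I t) / Real.exp (2*b*t) = Real.exp (-(2*b*t)) + y t := by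
      simp only [hydef]
      rw [Real.exp_neg]
      field_simp
    linarith [heq ▸ h5]
  -- q and its derivative
  set q : ℝ → ℝ := fun t => (4*ε/lam) * (ε * Real.exp (b*t) / (1 + ε * Real.exp (b*t))) with hqdef
  have hden : ∀ t : ℝ, (0:ℝ) < 1 + ε * Real.exp (b*t) := by
    intro t; positivity
  have hqnn : ∀ t : ℝ, 0 ≤ q t := by
    intro t; simp only [hqdef]; positivity
  have hqle : ∀ t : ℝ, q t ≤ 4*ε/lam := by
    intro t
    simp only [hqdef]
    have h' : ε * Real.exp (b*t) / (1 + ε * Real.exp (b*t)) ≤ 1 := by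
      rw [div_le_one (hden t)]
      nlinarith [Real.exp_pos (b*t)]
    exact mul_le_of_le_one_right (by positivity) h'
  have hqd : ∀ t : ℝ, HasDerivAt q
      (2 * (ε * Real.exp (b*t)) / (1 + ε * Real.exp (b*t))^2) t := by
    intro t
    have hP : HasDerivAt (fun t => ε * Real.exp (b*t)) (ε * (Real.exp (b*t) * (b*1))) t :=
      (((hasDerivAt_id t).const_mul b).exp).const_mul ε
    have hD : HasDerivAt (fun t => 1 + ε * Real.exp (b*t)) (ε * (Real.exp (b*t) * (b*1))) t :=
      hP.const_add 1
    have h := (hP.div hD (ne_of_gt (hden t))).const_mul (4*ε/lam)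
    refine h.congr_deriv ?_
    simp only [id_eq, mul_one]
    have hb2 : (4*ε/lam) * (ε*b) = 2*ε := by rw [hbdef]; field_simp; ring
    rw [← mul_div_assoc]
    congr 1
    linear_combination (Real.exp (b*t)) * hb2
  have hqcont : Continuous q := by
    have hdq : Differentiable ℝ q := fun t => (hqd t).differentiableAt
    exact hdq.continuous
  -- W
  set W : ℝ → ℝ := fun t => x1 t + a2 * (q t * y t) with hWdef
  have hx1leW : ∀ t ∈ Set.Icc (0:ℝ) T, x1 t ≤ W t := by
    intro t ht
    simp only [hWdef]
    nlinarith [mul_nonneg (mul_nonneg h2 (hqnn t)) (hynn t ht)]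
  have hWcont : ContinuousOn W (Set.Icc 0 T) :=
    hx1c.add (continuousOn_const.mul (hqcont.continuousOn.mul hycont))
  -- g and G
  set g : ℝ → ℝ := fun t => 2*a1 + 4*a2*a3/lam + (a1/ε)*Real.exp (-(b*t)) with hgdef
  have hgnn : ∀ t : ℝ, 0 ≤ g t := by
    intro t; simp only [hgdef]; positivity
  set G : ℝ → ℝ := fun t => (2*a1 + 4*a2*a3/lam)*t + (2*a1/lam)*(1 - Real.exp (-(b*t))) with hGdef
  have hGd : ∀ t : ℝ, HasDerivAt G (g t) t := by
    intro t
    have ha' : HasDerivAt (fun t : ℝ => (2*a1 + 4*a2*a3/lam)*t) (2*a1 + 4*a2*a3/lam) t := by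
      simpa using (hasDerivAt_id t).const_mul (2*a1 + 4*a2*a3/lam)
    have hb' : HasDerivAt (fun t : ℝ => (2*a1/lam)*(1 - Real.exp (-(b*t))))
        ((2*a1/lam)*(0 - Real.exp (-(b*t)) * (-(b*1)))) t :=
      ((hasDerivAt_const t 1).sub (((hasDerivAt_id t).const_mul b).neg.exp)).const_mul (2*a1/lam)
    have h := ha'.add hb'
    refine h.congr_deriv ?_
    simp only [hgdef, id_eq, mul_one]
    rw [hbdef]
    field_simp
    ring
  have hG0 : G 0 = 0 := by simp [hGdef]
  have hexple1 : ∀ t : ℝ, 0 ≤ t → Real.exp (-(b*t)) ≤ 1 := by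
    intro t ht
    rw [← Real.exp_zero]
    apply Real.exp_le_exp.2
    nlinarith
  have hGnn : ∀ t ∈ Set.Icc (0:ℝ) T, 0 ≤ G t := by
    intro t ht
    simp only [hGdef]
    have h1' := hexple1 t ht.1
    have hc1 : (0:ℝ) ≤ 2*a1 + 4*a2*a3/lam := by positivity
    have h2a : (0:ℝ) ≤ 2*a1/lam := by positivity
    nlinarith [ht.1]
  have hGle : ∀ t ∈ Set.Icc (0:ℝ) T, G t ≤ A0 := by
    intro t ht
    simp only [hGdef, hA0def]
    have hc1 : (0:ℝ) ≤ 2*a1 + 4*a2*a3/lam := by positivity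
    have he : 0 < Real.exp (-(b*t)) := Real.exp_pos _
    have h2a : (0:ℝ) ≤ 2*a1/lam := by positivity
    nlinarith [mul_le_mul_of_nonneg_left ht.2 hc1]
  have hGcont : Continuous G := by
    have hdG : Differentiable ℝ G := fun t => (hGd t).differentiableAt
    exact hdG.continuous
  -- key derivative bound for W
  have hW'le : ∀ t ∈ Set.Ioo (0:ℝ) T,
      deriv x1 t + a2 * (2 * (ε * Real.exp (b*t)) / (1 + ε * Real.exp (b*t))^2 * y t
        + q t * (a3/ε * x1 t - 2*b*y t))
      ≤ g t * W t + a2 * ε * Real.exp (-(b*t)) := by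
    intro t ht
    clear_value b I y q W g
    have htT : t ∈ Set.Icc (0:ℝ) T := Set.mem_Icc_of_Ioo ht
    obtain ⟨hm1, hm2⟩ := hm t htT
    have hP0 : (0:ℝ) < ε * Real.exp (b*t) := by positivity
    have hd0 : (0:ℝ) < 1 + ε * Real.exp (b*t) := hden t
    have hm0 : (0:ℝ) < min (ε * Real.exp (b*t)) 1 := lt_min hP0 one_pos
    have hD1 : deriv x1 t ≤ a1 * (1 + (min (ε * Real.exp (b*t)) 1)⁻¹) * x1 t
        + a2 * (min (ε * Real.exp (b*t)) 1) * x2 t := by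
      have := hode1 t htT
      rwa [hm1, hm2] at this
    have hx2b := hx2y t htT
    have hyt := hynn t htT
    have hx1t := hx1nn t htT
    have hx1W := hx1leW t htT
    -- e1 : replace x2
    have e1 : a2 * (min (ε * Real.exp (b*t)) 1) * x2 t
        ≤ a2 * (min (ε * Real.exp (b*t)) 1) * (Real.exp (-(2*b*t)) + y t) := by
      apply mul_le_mul_of_nonneg_left hx2b
      positivity
    -- e2 : forcing bound
    have e2 : (min (ε * Real.exp (b*t)) 1) * Real.exp (-(2*b*t)) ≤ ε * Real.exp (-(b*t)) := by
      have hle : (min (ε * Real.exp (b*t)) 1) ≤ ε * Real.exp (b*t) := min_le_left _ _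
      have heq : ε * Real.exp (b*t) * Real.exp (-(2*b*t)) = ε * Real.exp (-(b*t)) := by
        rw [mul_assoc, ← Real.exp_add]
        ring_nf
      nlinarith [mul_le_mul_of_nonneg_right hle (Real.exp_pos (-(2*b*t))).le]
    -- e3 : inverse bound
    have e3 : (min (ε * Real.exp (b*t)) 1)⁻¹ ≤ 1 + ε⁻¹ * Real.exp (-(b*t)) := by
      have hPinv : (ε * Real.exp (b*t))⁻¹ = ε⁻¹ * Real.exp (-(b*t)) := by
        rw [mul_inv, Real.exp_neg]
      rcases min_cases (ε * Real.exp (b*t)) 1 with ⟨hmeq, _⟩ | ⟨hmeq, _⟩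
      · rw [hmeq, hPinv]
        nlinarith [Real.exp_pos (-(b*t))]
      · rw [hmeq]
        norm_num
        positivity
    -- e4 : coefficient of y is nonpositive
    have e4 : (min (ε * Real.exp (b*t)) 1)
        + 2 * (ε * Real.exp (b*t)) / (1 + ε * Real.exp (b*t))^2 - 2*b*q t ≤ 0 := by
      have hq2 : 2*b*q t = 4 * (ε * Real.exp (b*t)) / (1 + ε * Real.exp (b*t)) := by
        simp only [hqdef]
        rw [hbdef]
        field_simp
      have hP2 : (0:ℝ) < (1 + ε * Real.exp (b*t))^2 := by positivity
      have e4' : min (ε * Real.exp (b*t)) 1 * (1 + ε * Real.exp (b*t))^2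
          + 2 * (ε * Real.exp (b*t)) ≤ 4 * (ε * Real.exp (b*t)) * (1 + ε * Real.exp (b*t)) := by
        rcases min_cases (ε * Real.exp (b*t)) 1 with ⟨hmeq, hle1⟩ | ⟨hmeq, hle1⟩
        · rw [hmeq]
          nlinarith [hP0, mul_le_mul_of_nonneg_right hle1 hP0.le,
            mul_le_mul_of_nonneg_right (mul_le_mul_of_nonneg_right hle1 hP0.le) hP0.le]
        · rw [hmeq]
          nlinarith [hP0, hle1, sq_nonneg (ε * Real.exp (b*t) - 1)]
      have h5 : min (ε * Real.exp (b*t)) 1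
          + 2 * (ε * Real.exp (b*t)) / (1 + ε * Real.exp (b*t))^2
          = (min (ε * Real.exp (b*t)) 1 * (1 + ε * Real.exp (b*t))^2
            + 2 * (ε * Real.exp (b*t))) / (1 + ε * Real.exp (b*t))^2 := by
        field_simp
      have h4 : 4 * (ε * Real.exp (b*t)) / (1 + ε * Real.exp (b*t))
          = 4 * (ε * Real.exp (b*t)) * (1 + ε * Real.exp (b*t)) / (1 + ε * Real.exp (b*t))^2 := by
        field_simp
      rw [hq2, h5, h4, sub_nonpos]
      exact div_le_div_of_nonneg_right e4' hP2.le
    -- assemble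
    have c1 : (a1 * (1 + (min (ε * Real.exp (b*t)) 1)⁻¹) + a2 * q t * (a3/ε)) * x1 t
        ≤ g t * x1 t := by
      apply mul_le_mul_of_nonneg_right _ hx1t
      simp only [hgdef]
      have e5 : a2 * q t * (a3/ε) ≤ 4*a2*a3/lam := by
        have := hqle t
        have h0' : (0:ℝ) ≤ a2 * (a3/ε) := by positivity
        have heq : a2 * (4*ε/lam) * (a3/ε) = 4*a2*a3/lam := by
          field_simp
        nlinarith [mul_le_mul_of_nonneg_right (mul_le_mul_of_nonneg_left (hqle t) h2) (by positivity : (0:ℝ) ≤ a3/ε)]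
      have e3' : a1 * (1 + (min (ε * Real.exp (b*t)) 1)⁻¹) ≤ 2*a1 + (a1/ε)*Real.exp (-(b*t)) := by
        have := mul_le_mul_of_nonneg_left e3 h1
        have hdiv : a1 * (ε⁻¹ * Real.exp (-(b*t))) = (a1/ε)*Real.exp (-(b*t)) := by
          rw [div_eq_mul_inv]; ring
        nlinarith
      linarith
    have c4 : g t * x1 t ≤ g t * W t := mul_le_mul_of_nonneg_left hx1W (hgnn t)
    have c2 : a2 * ((min (ε * Real.exp (b*t)) 1) * Real.exp (-(2*b*t)))
        ≤ a2 * (ε * Real.exp (-(b*t))) := mul_le_mul_of_nonneg_left e2 h2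
    have c3 : a2 * ((min (ε * Real.exp (b*t)) 1)
        + 2 * (ε * Real.exp (b*t)) / (1 + ε * Real.exp (b*t))^2 - 2*b*q t) * y t ≤ 0 :=
      mul_nonpos_of_nonpos_of_nonneg (mul_nonpos_of_nonneg_of_nonpos h2 e4) hyt
    linarith [hD1, e1, c1, c4, c2, c3]
  -- the Gronwall functional Z
  have hWderiv : ∀ t ∈ Set.Ioo (0:ℝ) T, HasDerivAt W
      (deriv x1 t + a2 * (2 * (ε * Real.exp (b*t)) / (1 + ε * Real.exp (b*t))^2 * y t
        + q t * (a3/ε * x1 t - 2*b*y t))) t := by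
    intro t ht
    rw [hWdef]
    exact ((hd1 t (Set.mem_Icc_of_Ioo ht)).hasDerivAt.add
      (((hqd t).mul (hyderiv t ht)).const_mul a2))
  have hZc : ContinuousOn
      (fun t => W t * Real.exp (-(G t)) - a2*(2*ε^2/lam)*(1 - Real.exp (-(b*t))))
      (Set.Icc 0 T) := by
    apply ContinuousOn.sub
    · exact hWcont.mul ((hGcont.neg.rexp).continuousOn)
    · exact continuousOn_const.mul
        ((continuous_const.sub ((hexpnc b))).continuousOn)
  have hZd : ∀ t ∈ Set.Ioo (0:ℝ) T, ∃ f',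
      HasDerivAt (fun t => W t * Real.exp (-(G t)) - a2*(2*ε^2/lam)*(1 - Real.exp (-(b*t)))) f' t
        ∧ f' ≤ 0 := by
    intro t ht
    have htT : t ∈ Set.Icc (0:ℝ) T := Set.mem_Icc_of_Ioo ht
    refine ⟨(deriv x1 t + a2 * (2 * (ε * Real.exp (b*t)) / (1 + ε * Real.exp (b*t))^2 * y t
        + q t * (a3/ε * x1 t - 2*b*y t))) * Real.exp (-(G t))
        + W t * (Real.exp (-(G t)) * (-(g t)))
        - a2*(2*ε^2/lam) * (0 - Real.exp (-(b*t)) * (-(b*1))), ?_, ?_⟩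
    · exact ((hWderiv t ht).mul (((hGd t).neg).exp)).sub
        (((hasDerivAt_const t (1:ℝ)).sub (((hasDerivAt_id t).const_mul b).neg.exp)).const_mul
          (a2*(2*ε^2/lam)))
    · have heps : a2*(2*ε^2/lam)*(b*1) = a2*ε := by rw [hbdef]; field_simp
      have heps2 : a2*(2*ε^2/lam)*(b*1)*Real.exp (-(b*t)) = a2*ε*Real.exp (-(b*t)) := by
        rw [heps]
      have he0 : (0:ℝ) < Real.exp (-(G t)) := Real.exp_pos _
      have he1 : Real.exp (-(G t)) ≤ 1 := by
        rw [← Real.exp_zero]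
        exact Real.exp_le_exp.2 (neg_nonpos.2 (hGnn t htT))
      have hint1 := mul_le_mul_of_nonneg_right (hW'le t ht) he0.le
      have hint2 : (a2*ε*Real.exp (-(b*t))) * Real.exp (-(G t)) ≤ a2*ε*Real.exp (-(b*t)) :=
        mul_le_of_le_one_right (by positivity) he1
      clear_value b I y q W g G
      nlinarith [hint1, hint2, heps2]
  have hZ := mono_aux hT0 hZc hZd
  -- bound on W hence on x1
  have hx1bd : ∀ s ∈ Set.Icc (0:ℝ) T, x1 s ≤ C1 * ε^2 := by
    intro s hs
    have hZs := hZ s hs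
    have hZ0 : W 0 * Real.exp (-(G 0)) - a2*(2*ε^2/lam)*(1 - Real.exp (-(b*(0:ℝ)))) = 0 := by
      have hW0 : W 0 = 0 := by
        simp only [hWdef]
        rw [hx10, hy0]
        ring
      rw [hW0, hG0]
      norm_num
    rw [hZ0] at hZs
    have he : (0:ℝ) < Real.exp (-(G s)) := Real.exp_pos _
    have hid : Real.exp (-(G s)) * Real.exp (G s) = 1 := by
      rw [← Real.exp_add]; simp
    have h9 : W s * Real.exp (-(G s)) ≤ a2*(2*ε^2/lam) := by
      nlinarith [Real.exp_pos (-(b*s)), (by positivity : (0:ℝ) ≤ a2*(2*ε^2/lam))]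
    have h7 : W s ≤ a2*(2*ε^2/lam) * Real.exp (G s) := by
      calc W s = W s * Real.exp (-(G s)) * Real.exp (G s) := by
            rw [mul_assoc, hid, mul_one]
      _ ≤ a2*(2*ε^2/lam) * Real.exp (G s) :=
            mul_le_mul_of_nonneg_right h9 (Real.exp_pos _).le
    have h8 : a2*(2*ε^2/lam) * Real.exp (G s) ≤ a2*(2*ε^2/lam) * Real.exp A0 :=
      mul_le_mul_of_nonneg_left (Real.exp_le_exp.2 (hGle s hs)) (by positivity)
    have h10 : a2*(2*ε^2/lam) * Real.exp A0 = C1 * ε^2 := by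
      rw [hC1def]; ring
    have := hx1leW s hs
    clear_value A0 C1 C t1 b I y q W g G
    linarith
  -- bound on y
  have hKnn : (0:ℝ) ≤ a3/lam*(C1*ε^2) := by positivity
  have hybd : ∀ t ∈ Set.Icc (0:ℝ) T, y t ≤ a3/lam*(C1*ε^2) := by
    have hfc : ContinuousOn (fun t => (y t - a3/lam*(C1*ε^2)) * Real.exp (2*b*t))
        (Set.Icc 0 T) :=
      (hycont.sub continuousOn_const).mul ((hexpc (2*b)).continuousOn)
    have hfd : ∀ t ∈ Set.Ioo (0:ℝ) T, ∃ f',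
        HasDerivAt (fun t => (y t - a3/lam*(C1*ε^2)) * Real.exp (2*b*t)) f' t ∧ f' ≤ 0 := by
      intro t ht
      have htT : t ∈ Set.Icc (0:ℝ) T := Set.mem_Icc_of_Ioo ht
      refine ⟨(a3/ε * x1 t - 2*b*y t) * Real.exp (2*b*t)
        + (y t - a3/lam*(C1*ε^2)) * (Real.exp (2*b*t) * (2*b*1)), ?_, ?_⟩
      · exact ((hyderiv t ht).sub_const _).mul (((hasDerivAt_id t).const_mul (2*b)).exp)
      · have hKfact : 2*b*(a3/lam*(C1*ε^2)) = a3/ε*(C1*ε^2) := by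
          rw [hbdef]; field_simp
        have hx1K : a3/ε * x1 t ≤ a3/ε*(C1*ε^2) :=
          mul_le_mul_of_nonneg_left (hx1bd t htT) (by positivity)
        have hh := mul_le_mul_of_nonneg_right hx1K (Real.exp_pos (2*b*t)).le
        have heq2 : 2*b*(a3/lam*(C1*ε^2))*Real.exp (2*b*t)
            = a3/ε*(C1*ε^2)*Real.exp (2*b*t) := by rw [hKfact]
        clear_value b I y q W g G
        nlinarith [hh, heq2]
    have key := mono_aux hT0 hfc hfd
    intro t ht
    have h := key t ht
    rw [hy0] at h
    norm_num at h
    have hexp2 : (0:ℝ) < Real.exp (2*b*t) := Real.exp_pos _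
    nlinarith [h, hexp2, hKnn]
  -- conclusions
  constructor
  · intro s hs
    have := hx1bd s hs
    have hC1C : C1 ≤ C := by
      rw [hCdef]
      nlinarith [hC1nn, div_nonneg h3 hlam.le]
    nlinarith [sq_nonneg ε]
  · intro t ht
    have hA := hx2y t ht
    have hB := hybd t ht
    have hexpeq : -(lam*t)/ε = -(2*b*t) := by
      rw [hbdef]; field_simp
    rw [hexpeq]
    have hKC : a3/lam*(C1*ε^2) ≤ C*ε^2 := by
      rw [hCdef]
      nlinarith [hC1nn, div_nonneg h3 hlam.le, sq_nonneg ε]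
    clear_value A0 C1 C t1 b I y q W g G
    linarith
end
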